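/- Counterexample to the many-sorted Łoś–Vaught test without splitness: Let Σ have sorts σ₁, σ₂ and one function symbol f : σ₁ → σ₂, and let T be the theory asserting that both sorts are infinite and that f is either injective or constant. Then T is κ-categorical for κ(σ₁) = ℵ₁, κ(σ₂) = ℵ₀, but T is not complete: the sentence ∀x,y:σ₁ (f(x)=f(y)) is neither provable nor refutable from T. -/

import Mathlib

set_option autoImplicit false

/-- A many-sorted first-order signature. -/
structure MSSignature : Type 1 where
  Sorts : Type
  Func : Type
  Pred : Type
  funcDom : Func → List Sorts
  funcCod : Func → Sorts
  predDom : Pred → List Sorts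

namespace MS

variable (Sg : MSSignature)

/-- Many-sorted terms; variables of each sort are indexed by naturals. -/
inductive Term : Sg.Sorts → Type where
  | var (s : Sg.Sorts) (n : ℕ) : Term s
  | app (f : Sg.Func)
      (args : ∀ i : Fin (Sg.funcDom f).length, Term ((Sg.funcDom f).get i)) :
      Term (Sg.funcCod f)

/-- Many-sorted first-order formulas. -/
inductive Formula : Type where
  | eq {s : Sg.Sorts} (t u : Term Sg s) : Formula
  | pred (P : Sg.Pred)
      (args : ∀ i : Fin (Sg.predDom P).length, Term Sg ((Sg.predDom P).get i)) : Formula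
  | falsum : Formula
  | imp (φ ψ : Formula) : Formula
  | all (s : Sg.Sorts) (n : ℕ) (φ : Formula) : Formula

/-- A structure for a many-sorted signature: each sort gets a nonempty domain. -/
structure Structure : Type 1 where
  dom : Sg.Sorts → Type
  dom_nonempty : ∀ s, Nonempty (dom s)
  interpFunc : ∀ f : Sg.Func,
    (∀ i : Fin (Sg.funcDom f).length, dom ((Sg.funcDom f).get i)) → dom (Sg.funcCod f)
  interpPred : ∀ P : Sg.Pred,
    (∀ i : Fin (Sg.predDom P).length, dom ((Sg.predDom P).get i)) → Prop

variable {Sg}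

/-- Variable assignments. -/
def Assign (A : Structure Sg) : Type := ∀ s : Sg.Sorts, ℕ → A.dom s

open Classical in
noncomputable
def Assign.update {A : Structure Sg} (ν : Assign A) (s : Sg.Sorts) (n : ℕ) (a : A.dom s) :
    Assign A := fun t m =>
  if h : s = t then (if m = n then h ▸ a else ν t m) else ν t m

def Term.eval {A : Structure Sg} (ν : Assign A) : ∀ {s : Sg.Sorts}, Term Sg s → A.dom s
  | _, .var s n => ν s n
  | _, .app f args => A.interpFunc f fun i => Term.eval ν (args i)

/-- Tarskian satisfaction. -/
def Sat (A : Structure Sg) (ν : Assign A) : Formula Sg → Prop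
  | .eq t u => t.eval ν = u.eval ν
  | .pred P args => A.interpPred P fun i => (args i).eval ν
  | .falsum => False
  | .imp φ ψ => Sat A ν φ → Sat A ν ψ
  | .all s n φ => ∀ a : A.dom s, Sat A (ν.update s n a) φ

/-- Derived connectives. -/
def Formula.not (φ : Formula Sg) : Formula Sg := .imp φ .falsum
def Formula.and (φ ψ : Formula Sg) : Formula Sg := (Formula.imp φ ψ.not).not
def Formula.or (φ ψ : Formula Sg) : Formula Sg := .imp φ.not ψ
def Formula.ex (s : Sg.Sorts) (n : ℕ) (φ : Formula Sg) : Formula Sg :=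
  ((Formula.all s n φ.not)).not
def Formula.andList : List (Formula Sg) → Formula Sg :=
  List.foldr Formula.and (Formula.not .falsum)
def Formula.orList : List (Formula Sg) → Formula Sg :=
  List.foldr Formula.or .falsum

/-- Occurrence of variable `(s, n)` in a term. -/
def Term.varOccurs (s : Sg.Sorts) (n : ℕ) : ∀ {t : Sg.Sorts}, Term Sg t → Prop
  | _, .var s' n' => s = s' ∧ n = n'
  | _, .app _ args => ∃ i, Term.varOccurs s n (args i)

/-- Free occurrence of variable `(s, n)` in a formula. -/
def Formula.varFree (s : Sg.Sorts) (n : ℕ) : Formula Sg → Prop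
  | .eq t u => t.varOccurs s n ∨ u.varOccurs s n
  | .pred _ args => ∃ i, (args i).varOccurs s n
  | .falsum => False
  | .imp φ ψ => φ.varFree s n ∨ ψ.varFree s n
  | .all s' n' φ => φ.varFree s n ∧ ¬(s = s' ∧ n = n')

def Formula.IsSentence (φ : Formula Sg) : Prop := ∀ s n, ¬ φ.varFree s n

/-- Quantifier-free formulas. -/
def Formula.IsQF : Formula Sg → Prop
  | .eq _ _ => True
  | .pred _ _ => True
  | .falsum => True
  | .imp φ ψ => φ.IsQF ∧ ψ.IsQF
  | .all _ _ _ => False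

/-- A structure is a model of a set of formulas (a theory) if it satisfies
every axiom under every assignment. -/
def Models (A : Structure Sg) (T : Set (Formula Sg)) : Prop :=
  ∀ φ ∈ T, ∀ ν : Assign A, Sat A ν φ

/-- Elementary equivalence: same sentences hold. -/
def ElemEquiv (A B : Structure Sg) : Prop :=
  ∀ φ : Formula Sg, φ.IsSentence →
    ((∀ ν : Assign A, Sat A ν φ) ↔ (∀ ν : Assign B, Sat B ν φ))

/-- Substructures: sort-wise subsets closed under the functions. -/
structure Substructure (A : Structure Sg) : Type 1 where
  carrier : ∀ s : Sg.Sorts, Set (A.dom s)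
  carrier_nonempty : ∀ s, (carrier s).Nonempty
  closed : ∀ (f : Sg.Func)
    (args : ∀ i : Fin (Sg.funcDom f).length, A.dom ((Sg.funcDom f).get i)),
    (∀ i, args i ∈ carrier _) → A.interpFunc f args ∈ carrier _

/-- The induced structure on a substructure. -/
def Substructure.toStructure {A : Structure Sg} (B : Substructure A) : Structure Sg where
  dom s := ↥(B.carrier s)
  dom_nonempty s := ⟨⟨(B.carrier_nonempty s).choose, (B.carrier_nonempty s).choose_spec⟩⟩
  interpFunc f args :=
    ⟨A.interpFunc f fun i => (args i).1, B.closed f _ fun i => (args i).2⟩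
  interpPred P args := A.interpPred P fun i => (args i).1

/-- View an assignment into a substructure as an assignment into the ambient structure. -/
def Substructure.amb {A : Structure Sg} (B : Substructure A)
    (ν : Assign B.toStructure) : Assign A := fun s n => (ν s n).1

/-- `B` is an elementary substructure of `A`. -/
def Substructure.IsElementary {A : Structure Sg} (B : Substructure A) : Prop :=
  ∀ (φ : Formula Sg) (ν : Assign B.toStructure),
    Sat B.toStructure ν φ ↔ Sat A (B.amb ν) φ

/-- Isomorphisms of structures. -/
structure Iso (A B : Structure Sg) : Type 1 where
  toEquiv : ∀ s, A.dom s ≃ B.dom s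
  map_func : ∀ (f : Sg.Func) args,
    toEquiv _ (A.interpFunc f args) = B.interpFunc f (fun i => toEquiv _ (args i))
  map_pred : ∀ (P : Sg.Pred) args,
    A.interpPred P args ↔ B.interpPred P (fun i => toEquiv _ (args i))

end MS

/-- The cardinality of a signature: sorts + function symbols + predicate symbols. -/
noncomputable def MSSignature.card (Sg : MSSignature) : Cardinal :=
  Cardinal.mk Sg.Sorts + Cardinal.mk Sg.Func + Cardinal.mk Sg.Pred

/-- A countable signature. -/
def MSSignature.IsCountable (Sg : MSSignature) : Prop :=
  Countable Sg.Sorts ∧ Countable Sg.Func ∧ Countable Sg.Pred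

open MS Cardinal

namespace MS

/-- `T` is `κ`-categorical: there is exactly one model (up to isomorphism) whose
sort cardinalities are given by `κ`. -/
def Categorical {Sg : MSSignature} (T : Set (Formula Sg))
    (κ : Sg.Sorts → Cardinal) : Prop :=
  (∃ A : Structure Sg, Models A T ∧ ∀ s, #(A.dom s) = κ s) ∧
    ∀ A B : Structure Sg, Models A T → Models B T →
      (∀ s, #(A.dom s) = κ s) → (∀ s, #(B.dom s) = κ s) → Nonempty (Iso A B)

end MS

/-- The signature with two sorts `0, 1`, a single unary function symbol
`f : σ₀ → σ₁`, and no predicate symbols. -/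
def twoSortedFunSig : MSSignature where
  Sorts := Fin 2
  Func := Unit
  Pred := Empty
  funcDom := fun _ => [0]
  funcCod := fun _ => 1
  predDom := fun P => P.elim

namespace TwoSorted

open MS

/-- Application of the function symbol `f` to a term of sort `σ₀`. -/
def fapp (t : Term twoSortedFunSig (0 : Fin 2)) : Term twoSortedFunSig (1 : Fin 2) :=
  Term.app () (fun i => match i with | ⟨0, _⟩ => t)

/-- The conjunction of all `¬ (xᵢ = xⱼ)` for `i < j < n`, over variables of sort `s`. -/
def distinctVars (s : Fin 2) (n : ℕ) : Formula twoSortedFunSig :=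
  Formula.andList (((List.range n).flatMap fun j => (List.range j).map fun i => (i, j)).map
    fun p => (Formula.eq (Term.var s p.1) (Term.var (Sg := twoSortedFunSig) s p.2)).not)

/-- Existentially quantify the variables `0, …, n-1` of sort `s`. -/
def exBlock (s : Fin 2) : ℕ → Formula twoSortedFunSig → Formula twoSortedFunSig
  | 0, φ => φ
  | n + 1, φ => Formula.ex s n (exBlock s n φ)

/-- "There are at least `n` elements of sort `s`". -/
def atLeast (s : Fin 2) (n : ℕ) : Formula twoSortedFunSig :=
  exBlock s n (distinctVars s n)

/-- "`f` is injective". -/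
def injF : Formula twoSortedFunSig :=
  Formula.all (0 : Fin 2) 0 (Formula.all (0 : Fin 2) 1
    (Formula.imp (Formula.eq (fapp (Term.var (Sg := twoSortedFunSig) (0 : Fin 2) 0)) (fapp (Term.var (Sg := twoSortedFunSig) (0 : Fin 2) 1)))
      (Formula.eq (Term.var (0 : Fin 2) 0) (Term.var (Sg := twoSortedFunSig) (0 : Fin 2) 1))))

/-- "`f` is constant": `∀ x y : σ₀, f x = f y`. -/
def constF : Formula twoSortedFunSig :=
  Formula.all (0 : Fin 2) 0 (Formula.all (0 : Fin 2) 1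
    (Formula.eq (fapp (Term.var (Sg := twoSortedFunSig) (0 : Fin 2) 0)) (fapp (Term.var (Sg := twoSortedFunSig) (0 : Fin 2) 1))))

/-- The theory: both sorts are infinite and `f` is injective or constant. -/
def theoryT : Set (Formula twoSortedFunSig) :=
  {φ | ∃ n : ℕ, φ = atLeast 0 n} ∪ {φ | ∃ n : ℕ, φ = atLeast 1 n} ∪
    {Formula.or injF constF}

end TwoSorted
namespace MS

variable {Sg : MSSignature} {A : Structure Sg}

lemma update_self (ν : Assign A) (s : Sg.Sorts) (n : ℕ) (a : A.dom s) :
    ν.update s n a s n = a := by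
  simp [Assign.update]

lemma update_other (ν : Assign A) (s : Sg.Sorts) (n : ℕ) (a : A.dom s)
    (t : Sg.Sorts) (m : ℕ) (h : ¬ (s = t ∧ m = n)) : ν.update s n a t m = ν t m := by
  unfold Assign.update
  by_cases hs : s = t
  · subst hs
    simp_all
  · simp [hs]

lemma sat_not {ν : Assign A} {φ : Formula Sg} : Sat A ν φ.not ↔ ¬ Sat A ν φ := Iff.rfl

lemma sat_and {ν : Assign A} {φ ψ : Formula Sg} :
    Sat A ν (φ.and ψ) ↔ Sat A ν φ ∧ Sat A ν ψ := by
  simp only [Formula.and, Formula.not, Sat]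
  tauto

lemma sat_or {ν : Assign A} {φ ψ : Formula Sg} :
    Sat A ν (φ.or ψ) ↔ Sat A ν φ ∨ Sat A ν ψ := by
  simp only [Formula.or, Formula.not, Sat]
  tauto

lemma sat_ex {ν : Assign A} {s : Sg.Sorts} {n : ℕ} {φ : Formula Sg} :
    Sat A ν (Formula.ex s n φ) ↔ ∃ a, Sat A (ν.update s n a) φ := by
  simp only [Formula.ex, Formula.not, Sat]
  rw [← not_forall_not]
  tauto

lemma sat_andList {ν : Assign A} {l : List (Formula Sg)} :
    Sat A ν (Formula.andList l) ↔ ∀ φ ∈ l, Sat A ν φ := by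
  induction l with
  | nil => simp [Formula.andList, Formula.not, Sat]
  | cons φ l ih =>
    simp only [Formula.andList, List.foldr] at ih ⊢
    rw [sat_and, ih]
    simp

/-- Update the first `n` variables of sort `s`. -/
noncomputable def updTo (ν : Assign A) (s : Sg.Sorts) : ∀ n : ℕ, (Fin n → A.dom s) → Assign A
  | 0, _ => ν
  | n+1, a => (updTo ν s n (fun i => a i.castSucc)).update s n (a (Fin.last n))

lemma updTo_other (ν : Assign A) (s : Sg.Sorts) (n : ℕ) (a : Fin n → A.dom s)
    (t : Sg.Sorts) (m : ℕ) (h : t ≠ s) : updTo ν s n a t m = ν t m := by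
  induction n with
  | zero => rfl
  | succ n ih =>
    rw [updTo, update_other _ _ _ _ _ _ (by tauto), ih]

lemma updTo_self (ν : Assign A) (s : Sg.Sorts) (n : ℕ) (a : Fin n → A.dom s) (m : ℕ) :
    updTo ν s n a s m = if h : m < n then a ⟨m, h⟩ else ν s m := by
  induction n with
  | zero => simp [updTo]
  | succ n ih =>
    rw [updTo]
    by_cases hm : m = n
    · subst hm
      rw [update_self]
      simp [Fin.last]
    · rw [update_other _ _ _ _ _ _ (by tauto), ih]
      by_cases h1 : m < n
      · rw [dif_pos h1, dif_pos (Nat.lt_succ_of_lt h1)]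
        rfl
      · rw [dif_neg h1, dif_neg (by omega)]

lemma updTo_update_comm (ν : Assign A) (s : Sg.Sorts) (n : ℕ) (a : Fin n → A.dom s)
    (b : A.dom s) : updTo (ν.update s n b) s n a = (updTo ν s n a).update s n b := by
  funext t m
  by_cases ht : t = s
  · subst ht
    by_cases hm : m = n
    · subst hm
      rw [updTo_self, dif_neg (by omega), update_self, update_self]
    · rw [update_other _ _ _ _ _ _ (by tauto), updTo_self, updTo_self]
      by_cases h1 : m < n
      · rw [dif_pos h1, dif_pos h1]
      · rw [dif_neg h1, dif_neg h1, update_other _ _ _ _ _ _ (by tauto)]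
  · rw [updTo_other _ _ _ _ _ _ ht, update_other _ _ _ _ _ _ (by tauto),
      update_other _ _ _ _ _ _ (by tauto), updTo_other _ _ _ _ _ _ ht]

end MS
namespace TwoSorted
open MS

variable {A : MS.Structure twoSortedFunSig}

lemma sat_exBlock (s : Fin 2) :
    ∀ (n : ℕ) (ν : Assign A) (φ : Formula twoSortedFunSig) (a : Fin n → A.dom s),
      Sat A (updTo ν s n a) φ → Sat A ν (exBlock s n φ)
  | 0, ν, φ, a, h => h
  | n+1, ν, φ, a, h => by
    rw [exBlock]
    apply sat_ex.mpr
    refine ⟨a (Fin.last n), sat_exBlock s n _ φ (fun i => a i.castSucc) ?_⟩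
    erw [updTo_update_comm]
    exact h

lemma sat_atLeast (s : Fin 2) [Infinite (A.dom s)] (n : ℕ) (ν : Assign A) :
    Sat A ν (atLeast s n) := by
  set e : Fin n → A.dom s := fun i => Infinite.natEmbedding (A.dom s) i.val with he
  have hinj : Function.Injective e := by
    intro i j h
    have := (Infinite.natEmbedding (A.dom s)).injective h
    exact Fin.val_injective this
  apply sat_exBlock s n ν _ e
  unfold distinctVars
  rw [sat_andList]
  intro φ hφ
  simp only [List.mem_map, List.mem_flatMap, List.mem_range, Prod.exists] at hφ
  obtain ⟨i, j, ⟨j', hj', hij⟩, rfl⟩ := hφ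
  have hlt : i < j ∧ j < n := by
    simp only [List.mem_map, List.mem_range, Prod.mk.injEq] at hij
    obtain ⟨i', hi', h1, h2⟩ := hij
    omega
  rw [sat_not]
  simp only [Sat, Term.eval]
  erw [updTo_self, updTo_self, dif_pos (by omega : i < n), dif_pos hlt.2]
  intro h
  have := hinj h
  simp only [Fin.mk.injEq] at this
  omega

/-- The interpreted unary function. -/
def Fof (A : MS.Structure twoSortedFunSig) (a : A.dom (0 : Fin 2)) : A.dom (1 : Fin 2) :=
  A.interpFunc () (fun i => match i with | ⟨0, _⟩ => a)

lemma eval_fapp (ν : Assign A) (t : Term twoSortedFunSig (0 : Fin 2)) :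
    Term.eval ν (fapp t) = Fof A (Term.eval ν t) := by
  show A.interpFunc () _ = A.interpFunc () _
  congr 1
  funext i
  match i with
  | ⟨0, _⟩ => rfl

lemma interp_eq_Fof (f : twoSortedFunSig.Func) (args : ∀ i : Fin (twoSortedFunSig.funcDom f).length,
    A.dom ((twoSortedFunSig.funcDom f).get i)) :
    A.interpFunc f args = Fof A (args ⟨0, Nat.one_pos⟩) := by
  cases f
  show A.interpFunc () _ = A.interpFunc () _
  congr 1
  funext i
  match i with
  | ⟨0, _⟩ => rfl

lemma upd2_00 (ν : Assign A) (a b : A.dom (0 : Fin 2)) :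
    ((ν.update (0 : Fin 2) 0 a).update (0 : Fin 2) 1 b) (0 : Fin 2) 0 = a := by
  exact (update_other _ _ _ _ _ _ (by simp)).trans (update_self _ _ _ _)

lemma upd2_01 (ν : Assign A) (a b : A.dom (0 : Fin 2)) :
    ((ν.update (0 : Fin 2) 0 a).update (0 : Fin 2) 1 b) (0 : Fin 2) 1 = b :=
  update_self _ _ _ _

lemma sat_constF_iff (ν : Assign A) :
    Sat A ν constF ↔ ∀ a b : A.dom (0 : Fin 2), Fof A a = Fof A b := by
  constructor
  · intro h a b
    have h2 := h a b
    simp only [Sat] at h2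
    rw [eval_fapp, eval_fapp] at h2
    simp only [Term.eval] at h2
    rwa [upd2_00, upd2_01] at h2
  · intro h a b
    show MS.Sat A _ _
    simp only [Sat]
    rw [eval_fapp, eval_fapp]
    simp only [Term.eval]
    rw [upd2_00, upd2_01]
    exact h a b

lemma sat_injF_iff (ν : Assign A) :
    Sat A ν injF ↔ Function.Injective (Fof A) := by
  constructor
  · intro h a b hab
    have h2 := h a b
    simp only [Sat] at h2
    rw [eval_fapp, eval_fapp] at h2
    simp only [Term.eval] at h2
    rw [upd2_00, upd2_01] at h2
    exact h2 hab
  · intro h a b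
    show MS.Sat A _ _
    simp only [Sat]
    rw [eval_fapp, eval_fapp]
    simp only [Term.eval]
    rw [upd2_00, upd2_01]
    exact fun hab => h hab

end TwoSorted
namespace TwoSorted
open MS Cardinal

/-- Sort interpretation helper. -/
def pick (D0 D1 : Type) : Fin 2 → Type
  | ⟨0, _⟩ => D0
  | ⟨1, _⟩ => D1

/-- A structure with first sort `D0`, second sort `ℕ`, and `f` interpreted by `F0`. -/
def model (D0 : Type) [Nonempty D0] (F0 : D0 → ℕ) : MS.Structure twoSortedFunSig where
  dom := pick D0 ℕ
  dom_nonempty := fun s => match s with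
    | ⟨0, _⟩ => ‹Nonempty D0›
    | ⟨1, _⟩ => ⟨(0 : ℕ)⟩
  interpFunc := fun _ args => F0 (args ⟨0, Nat.one_pos⟩)
  interpPred := fun P => P.elim

lemma models_model (D0 : Type) [Nonempty D0] [Infinite D0] (F0 : D0 → ℕ)
    (hF : Function.Injective F0 ∨ ∀ a b, F0 a = F0 b) :
    Models (model D0 F0) theoryT := by
  intro φ hφ ν
  haveI : Infinite ((model D0 F0).dom (0 : Fin 2)) := ‹Infinite D0›
  haveI : Infinite ((model D0 F0).dom (1 : Fin 2)) := inferInstanceAs (Infinite ℕ)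
  rcases hφ with (⟨n, rfl⟩ | ⟨n, rfl⟩) | rfl
  · exact sat_atLeast 0 n ν
  · exact sat_atLeast 1 n ν
  · rw [sat_or]
    rcases hF with h | h
    · left
      rw [sat_injF_iff]
      exact fun a b hab => h hab
    · right
      rw [sat_constF_iff]
      exact h

instance : Infinite (Cardinal.aleph 1).out := by
  rw [Cardinal.infinite_iff, Cardinal.mk_out]
  exact Cardinal.aleph0_le_aleph 1

lemma constant_of_models (A : MS.Structure twoSortedFunSig) (hA : Models A theoryT)
    (h0 : #(A.dom (0 : Fin 2)) = aleph 1) (h1 : #(A.dom (1 : Fin 2)) = aleph0) :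
    ∀ a b, Fof A a = Fof A b := by
  have ν : Assign A := fun s _ => (A.dom_nonempty s).some
  have hor := hA (Formula.or injF constF) (Or.inr rfl) ν
  rw [sat_or, sat_injF_iff, sat_constF_iff] at hor
  rcases hor with hinj | hc
  · exfalso
    have hle : #(A.dom (0 : Fin 2)) ≤ #(A.dom (1 : Fin 2)) := Cardinal.mk_le_of_injective hinj
    rw [h0, h1] at hle
    exact absurd hle (not_le.mpr Cardinal.aleph0_lt_aleph_one)
  · exact hc

lemma iso_of (A B : MS.Structure twoSortedFunSig)
    (hA : ∀ a b, Fof A a = Fof A b) (hB : ∀ a b, Fof B a = Fof B b)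
    (e0 : A.dom (0 : Fin 2) ≃ B.dom (0 : Fin 2))
    (e1 : A.dom (1 : Fin 2) ≃ B.dom (1 : Fin 2)) : Nonempty (Iso A B) := by
  have x0 : A.dom (0 : Fin 2) := (A.dom_nonempty (0 : Fin 2)).some
  haveI := Classical.decEq (B.dom (1 : Fin 2))
  set e1' : A.dom (1 : Fin 2) ≃ B.dom (1 : Fin 2) :=
    e1.trans (Equiv.swap (e1 (Fof A x0)) (Fof B (e0 x0))) with he1'
  refine ⟨⟨fun s => match s with | ⟨0, _⟩ => e0 | ⟨1, _⟩ => e1', fun f args => ?_,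
    fun P => P.elim⟩⟩
  show e1' (A.interpFunc f args) = B.interpFunc f _
  rw [interp_eq_Fof, interp_eq_Fof]
  show e1' (Fof A (args ⟨0, Nat.one_pos⟩)) = Fof B (e0 (args ⟨0, Nat.one_pos⟩))
  rw [hA (args ⟨0, Nat.one_pos⟩) x0, hB (e0 (args ⟨0, Nat.one_pos⟩)) (e0 x0), he1']
  simp [Equiv.swap_apply_left]

end TwoSorted

open TwoSorted in
/-- Counterexample to the many-sorted Łoś–Vaught test without splitness: the theory
`T` (both sorts infinite, `f : σ₀ → σ₁` injective or constant) is `κ`-categorical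
for `κ(σ₀) = ℵ₁`, `κ(σ₁) = ℵ₀`, yet the sentence `∀ x y : σ₀, f x = f y` is neither
entailed nor refuted by `T`, so `T` is not complete. -/
theorem los_vaught_fails_without_split :
    Categorical TwoSorted.theoryT
        (fun s : Fin 2 => if s = 0 then Cardinal.aleph 1 else Cardinal.aleph0) ∧
    ¬ (∀ A : MS.Structure twoSortedFunSig, MS.Models A TwoSorted.theoryT →
        ∀ ν : MS.Assign A, MS.Sat A ν TwoSorted.constF) ∧
    ¬ (∀ A : MS.Structure twoSortedFunSig, MS.Models A TwoSorted.theoryT →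
        ∀ ν : MS.Assign A, ¬ MS.Sat A ν TwoSorted.constF) := by
  refine ⟨⟨?_, ?_⟩, ?_, ?_⟩
  · refine ⟨model (Cardinal.aleph 1).out (fun _ => 0),
      models_model _ _ (Or.inr fun a b => rfl), fun s => ?_⟩
    match s with
    | ⟨0, _⟩ =>
      show #(Cardinal.aleph 1).out = _
      simp [Cardinal.mk_out]
    | ⟨1, _⟩ =>
      show #ℕ = _
      simp [Fin.ext_iff]
  · intro A B hA hB hcA hcB
    have h0A : #(A.dom (0 : Fin 2)) = Cardinal.aleph 1 := by simpa using hcA (0 : Fin 2)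
    have h1A : #(A.dom (1 : Fin 2)) = Cardinal.aleph0 := by simpa [Fin.ext_iff] using hcA (1 : Fin 2)
    have h0B : #(B.dom (0 : Fin 2)) = Cardinal.aleph 1 := by simpa using hcB (0 : Fin 2)
    have h1B : #(B.dom (1 : Fin 2)) = Cardinal.aleph0 := by simpa [Fin.ext_iff] using hcB (1 : Fin 2)
    exact iso_of A B (constant_of_models A hA h0A h1A) (constant_of_models B hB h0B h1B)
      (Classical.choice (Cardinal.eq.mp (h0A.trans h0B.symm)))
      (Classical.choice (Cardinal.eq.mp (h1A.trans h1B.symm)))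
  · intro h
    have hm := models_model ℕ id (Or.inl fun a b hab => hab)
    have hc := (sat_constF_iff (fun s _ => ((model ℕ id).dom_nonempty s).some)).mp
      (h _ hm _)
    exact Nat.zero_ne_one (hc (0 : ℕ) (1 : ℕ))
  · intro h
    exact h (model ℕ (fun _ => 0)) (models_model _ _ (Or.inr fun a b => rfl))
      (fun s _ => ((model ℕ (fun _ => 0)).dom_nonempty s).some)
      ((sat_constF_iff _).mpr (fun a b => rfl))
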